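/- Suppose T = [0,1] and beliefs {Π(t) ⊆ Δ(S) : t ∈ T} are fully overlapping. Then any robust incentive compatible mechanism (q,p) satisfies the ex post envelope condition: for all t', t'' ∈ T and all s ∈ S, t''q(t'',s) − p(t'',s) − (t'q(t',s) − p(t',s)) = ∫_{t'}^{t''} q(t,s) dt. -/

import Mathlib

open MeasureTheory Set

lemma bdd_integrableOn {f : ℝ → ℝ} (hf : Measurable f) {C : ℝ}
    (hC : ∀ x, |f x| ≤ C) (a b : ℝ) : IntegrableOn f (Ioc a b) volume := by
  haveI : IsFiniteMeasure (volume.restrict (Ioc a b)) :=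
    ⟨by rw [Measure.restrict_apply_univ]; exact measure_Ioc_lt_top⟩
  exact (integrable_const C).mono' hf.aestronglyMeasurable
    (Filter.Eventually.of_forall fun x => by simpa using hC x)

lemma bdd_intervalIntegrable {f : ℝ → ℝ} (hf : Measurable f) {C : ℝ}
    (hC : ∀ x, |f x| ≤ C) (a b : ℝ) : IntervalIntegrable f volume a b :=
  ⟨bdd_integrableOn hf hC a b, bdd_integrableOn hf hC b a⟩

lemma key_integral {m W : ℝ → ℝ} {a b : ℝ} (hab : a ≤ b)
    (hmono : MonotoneOn m (Icc a b))
    (hineq : ∀ x ∈ Icc a b, ∀ y ∈ Icc a b, x ≤ y →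
      m x * (y - x) ≤ W y - W x ∧ W y - W x ≤ m y * (y - x)) :
    W b - W a = ∫ t in a..b, m t := by
  have hInt : IntervalIntegrable m volume a b :=
    (hmono.mono (by rw [uIcc_of_le hab])).intervalIntegrable
  set c := W b - W a - ∫ t in a..b, m t with hc
  have key : ∀ n : ℕ, 0 < n → |c| ≤ (m b - m a) * (b - a) / n := by
    intro n hn
    set Δ := (b - a) / n with hΔ
    have hΔ0 : 0 ≤ Δ := div_nonneg (by linarith) (Nat.cast_nonneg n)
    set x : ℕ → ℝ := fun j => a + j * Δ with hx
    have hx0 : x 0 = a := by simp [hx]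
    have hxn : x n = b := by
      have hn' : (n:ℝ) ≠ 0 := by exact_mod_cast hn.ne'
      simp only [hx, hΔ]
      rw [mul_div_assoc', mul_div_cancel_left₀ _ hn']
      ring
    have hxmono : ∀ j k : ℕ, j ≤ k → x j ≤ x k := by
      intro j k hjk
      have : (j : ℝ) ≤ k := Nat.cast_le.mpr hjk
      simp only [hx]
      nlinarith
    have hxmem : ∀ j ≤ n, x j ∈ Icc a b := fun j hj =>
      ⟨by rw [← hx0]; exact hxmono 0 j (Nat.zero_le _),
       by rw [← hxn]; exact hxmono j n hj⟩
    have hxd : ∀ j : ℕ, x (j + 1) - x j = Δ := by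
      intro j; simp only [hx]; push_cast; ring
    have hIj : ∀ j, j < n → IntervalIntegrable m volume (x j) (x (j + 1)) := by
      intro j hj
      refine hInt.mono_set ?_
      rw [uIcc_of_le (hxmono j (j+1) (Nat.le_succ _)), uIcc_of_le hab]
      exact Icc_subset_Icc (hxmem j hj.le).1 (hxmem (j+1) hj).2
    have bound : ∀ j, j < n →
        |(W (x (j+1)) - W (x j)) - ∫ t in x j..x (j+1), m t|
          ≤ (m (x (j+1)) - m (x j)) * Δ := by
      intro j hj
      have hmem1 := hxmem j hj.le
      have hmem2 := hxmem (j+1) hj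
      have hle : x j ≤ x (j+1) := hxmono j (j+1) (Nat.le_succ _)
      obtain ⟨hW1, hW2⟩ := hineq (x j) hmem1 (x (j+1)) hmem2 hle
      rw [hxd j] at hW1 hW2
      have hIlow : m (x j) * Δ ≤ ∫ t in x j..x (j+1), m t := by
        have := intervalIntegral.integral_mono_on hle
          (intervalIntegrable_const (c := m (x j))) (hIj j hj)
          (fun t ht => hmono hmem1 (⟨le_trans hmem1.1 ht.1, le_trans ht.2 hmem2.2⟩) ht.1)
        simpa [hxd j, mul_comm] using this
      have hIhigh : (∫ t in x j..x (j+1), m t) ≤ m (x (j+1)) * Δ := by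
        have := intervalIntegral.integral_mono_on hle
          (hIj j hj) (intervalIntegrable_const (c := m (x (j+1))))
          (fun t ht => hmono (⟨le_trans hmem1.1 ht.1, le_trans ht.2 hmem2.2⟩) hmem2 ht.2)
        simpa [hxd j, mul_comm] using this
      rw [abs_le]; constructor <;> linarith
    have hsumW : ∑ j ∈ Finset.range n, (W (x (j+1)) - W (x j)) = W b - W a := by
      rw [Finset.sum_range_sub (fun j => W (x j)), hx0, hxn]
    have hsumI : ∑ j ∈ Finset.range n, (∫ t in x j..x (j+1), m t) = ∫ t in a..b, m t := by
      rw [intervalIntegral.sum_integral_adjacent_intervals hIj, hx0, hxn]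
    have hsumM : ∑ j ∈ Finset.range n, (m (x (j+1)) - m (x j)) * Δ = (m b - m a) * Δ := by
      rw [← Finset.sum_mul, Finset.sum_range_sub (fun j => m (x j)), hx0, hxn]
    calc |c| = |∑ j ∈ Finset.range n, ((W (x (j+1)) - W (x j)) - ∫ t in x j..x (j+1), m t)| := by
          rw [Finset.sum_sub_distrib, hsumW, hsumI]
      _ ≤ ∑ j ∈ Finset.range n, |(W (x (j+1)) - W (x j)) - ∫ t in x j..x (j+1), m t| :=
          Finset.abs_sum_le_sum_abs _ _
      _ ≤ ∑ j ∈ Finset.range n, (m (x (j+1)) - m (x j)) * Δ :=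
          Finset.sum_le_sum (fun j hj => bound j (Finset.mem_range.mp hj))
      _ = (m b - m a) * Δ := hsumM
      _ = (m b - m a) * (b - a) / n := by rw [hΔ]; ring
  have habs : |c| ≤ 0 := by
    refine ge_of_tendsto (tendsto_const_div_atTop_nhds_zero_nat ((m b - m a) * (b - a))) ?_
    filter_upwards [Filter.eventually_gt_atTop 0] with n hn using key n hn
  have : c = 0 := abs_nonpos_iff.mp habs
  linarith [hc ▸ this]

/-- A set of measures has full dimension if the only bounded Borel function with zero
expectation under every element of the set is the zero function. -/
def FullDim {S : Type*} [MeasurableSpace S] (P : Set (MeasureTheory.Measure S)) : Prop :=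
  ∀ g : S → ℝ, Measurable g → (∃ M, ∀ s, |g s| ≤ M) →
    (∀ π ∈ P, ∫ s, g s ∂π = 0) → ∀ s, g s = 0

theorem stmt_5
    {S : Type*} [MeasurableSpace S] [MetricSpace S] [CompactSpace S] [BorelSpace S]
    (q p : ℝ → S → ℝ)
    (hq01 : ∀ t s, q t s ∈ Icc (0:ℝ) 1)
    (hqm : Measurable (Function.uncurry q)) (hpm : Measurable (Function.uncurry p))
    (hpb : ∃ M, ∀ t s, |p t s| ≤ M)
    (B : ℝ → Set (Measure S))
    (hBprob : ∀ t : ℝ, ∀ π ∈ B t, IsProbabilityMeasure π)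
    (hover : ∀ t ∈ Icc (0:ℝ) 1, ∃ δ > 0,
      FullDim (⋂ t' ∈ Metric.ball t δ ∩ Icc (0:ℝ) 1, B t'))
    (hric : ∀ t ∈ Icc (0:ℝ) 1, ∀ θ ∈ Icc (0:ℝ) 1, ∀ π ∈ B t,
      ∫ s, (t * q t s - p t s) ∂π ≥ ∫ s, (t * q θ s - p θ s) ∂π) :
    ∀ t' ∈ Icc (0:ℝ) 1, ∀ t'' ∈ Icc (0:ℝ) 1, ∀ s : S,
      t'' * q t'' s - p t'' s - (t' * q t' s - p t' s) = ∫ t in t'..t'', q t s := by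
  obtain ⟨M, hM⟩ := hpb
  have hq1 : ∀ t s, |q t s| ≤ 1 := fun t s =>
    abs_le.mpr ⟨by linarith [(hq01 t s).1], (hq01 t s).2⟩
  have hqsec : ∀ t, Measurable (q t) := fun t => hqm.of_uncurry_left
  have hpsec : ∀ t, Measurable (p t) := fun t => hpm.of_uncurry_left
  have hqsec' : ∀ s : S, Measurable (fun t => q t s) := fun s => hqm.of_uncurry_right
  have hqti : ∀ (s : S) (a b : ℝ), IntervalIntegrable (fun t => q t s) volume a b :=
    fun s a b => bdd_intervalIntegrable (hqsec' s) (fun t => hq1 t s) a b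
  -- local step
  have hloc : ∀ t₀ ∈ Icc (0:ℝ) 1, ∃ δ > 0, ∀ a b : ℝ,
      a ∈ Metric.ball t₀ δ ∩ Icc (0:ℝ) 1 → b ∈ Metric.ball t₀ δ ∩ Icc (0:ℝ) 1 → a ≤ b →
      ∀ s, b * q b s - p b s - (a * q a s - p a s) = ∫ t in a..b, q t s := by
    intro t₀ ht₀
    obtain ⟨δ, hδ, hFD⟩ := hover t₀ ht₀
    refine ⟨δ, hδ, ?_⟩
    intro a b ha hb hab
    have ha01 : a ∈ Icc (0:ℝ) 1 := ha.2
    have hb01 : b ∈ Icc (0:ℝ) 1 := hb.2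
    have hNconv : Convex ℝ (Metric.ball t₀ δ ∩ Icc (0:ℝ) 1) :=
      (convex_ball t₀ δ).inter (convex_Icc 0 1)
    have hsub : Icc a b ⊆ Metric.ball t₀ δ ∩ Icc (0:ℝ) 1 := hNconv.ordConnected.out ha hb
    set I : S → ℝ := fun s => ∫ t in a..b, q t s with hIdef
    have hImeas : Measurable I := by
      have hsm : StronglyMeasurable (Function.uncurry fun (s : S) (t : ℝ) => q t s) :=
        (hqm.comp measurable_swap).stronglyMeasurable
      have h2 := hsm.integral_prod_right (ν := volume.restrict (Ioc a b))
      have heq : I = fun s => ∫ t in Ioc a b, q t s := by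
        funext s; rw [hIdef]; exact intervalIntegral.integral_of_le hab
      rw [heq]; exact h2.measurable
    have hIbd : ∀ s, |I s| ≤ 1 := by
      intro s
      have h1 : ‖∫ t in a..b, q t s‖ ≤ 1 * |b - a| :=
        intervalIntegral.norm_integral_le_of_norm_le_const (fun t _ => by simpa using hq1 t s)
      have hba : |b - a| ≤ 1 := abs_le.mpr
        ⟨by linarith [ha01.2, hb01.1], by linarith [ha01.1, hb01.2]⟩
      calc |I s| = ‖∫ t in a..b, q t s‖ := rfl
        _ ≤ 1 * |b - a| := h1
        _ ≤ 1 := by linarith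
    set g : S → ℝ := fun s => (b * q b s - p b s) - (a * q a s - p a s) - I s with hgdef
    have hgmeas : Measurable g := (((measurable_const.mul (hqsec b)).sub (hpsec b)).sub
        ((measurable_const.mul (hqsec a)).sub (hpsec a))).sub hImeas
    have hgbd : ∃ C, ∀ s, |g s| ≤ C := by
      refine ⟨(1 + M) + (1 + M) + 1, fun s => ?_⟩
      have hqb := hq01 b s; have hqa := hq01 a s
      have hpbb := abs_le.mp (hM b s); have hpaa := abs_le.mp (hM a s)
      have hIb := abs_le.mp (hIbd s)
      have hb1 : b * q b s ≤ 1 := mul_le_one₀ hb01.2 hqb.1 hqb.2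
      have hb0 : 0 ≤ b * q b s := mul_nonneg hb01.1 hqb.1
      have ha1 : a * q a s ≤ 1 := mul_le_one₀ ha01.2 hqa.1 hqa.2
      have ha0 : 0 ≤ a * q a s := mul_nonneg ha01.1 hqa.1
      rw [hgdef]
      rw [abs_le]; constructor <;> simp only [] <;> nlinarith
    have hzero : ∀ π ∈ (⋂ t' ∈ Metric.ball t₀ δ ∩ Icc (0:ℝ) 1, B t'), ∫ s, g s ∂π = 0 := by
      intro π hπ
      have hπB : ∀ u ∈ Metric.ball t₀ δ ∩ Icc (0:ℝ) 1, π ∈ B u := fun u hu =>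
        mem_iInter₂.mp hπ u hu
      haveI : IsProbabilityMeasure π := hBprob a π (hπB a ha)
      have hqint : ∀ t, Integrable (q t) π := fun t =>
        (integrable_const 1).mono' (hqsec t).aestronglyMeasurable
          (Filter.Eventually.of_forall fun s => by simpa using hq1 t s)
      have hpint : ∀ t, Integrable (p t) π := fun t =>
        (integrable_const M).mono' (hpsec t).aestronglyMeasurable
          (Filter.Eventually.of_forall fun s => by simpa using hM t s)
      have hUint : ∀ (c t : ℝ), Integrable (fun s => c * q t s - p t s) π :=
        fun c t => ((hqint t).const_mul c).sub (hpint t)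
      set m : ℝ → ℝ := fun t => ∫ s, q t s ∂π with hmdef
      set W : ℝ → ℝ := fun t => ∫ s, (t * q t s - p t s) ∂π with hWdef
      have hWd : ∀ t : ℝ, W t = ∫ s, (t * q t s - p t s) ∂π := fun t => rfl
      have hmd : ∀ t : ℝ, m t = ∫ s, q t s ∂π := fun t => rfl
      have hWineq : ∀ x ∈ Metric.ball t₀ δ ∩ Icc (0:ℝ) 1,
          ∀ y ∈ Metric.ball t₀ δ ∩ Icc (0:ℝ) 1, m x * (y - x) ≤ W y - W x := by
        intro x hx y hy
        have h1 := hric y hy.2 x hx.2 π (hπB y hy)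
        have h2 : ∫ s, (y * q x s - p x s) ∂π = W x + (y - x) * m x := by
          have heq : (fun s => y * q x s - p x s)
              = fun s => (x * q x s - p x s) + (y - x) * q x s := by funext s; ring
          rw [heq, integral_add (hUint x x) ((hqint x).const_mul _), integral_const_mul,
            hWd, hmd]
        rw [h2, ← hWd y] at h1
        linarith
      have hineq : ∀ x ∈ Icc a b, ∀ y ∈ Icc a b, x ≤ y →
          m x * (y - x) ≤ W y - W x ∧ W y - W x ≤ m y * (y - x) := by
        intro x hx y hy hxy
        refine ⟨hWineq x (hsub hx) y (hsub hy), ?_⟩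
        have h := hWineq y (hsub hy) x (hsub hx)
        nlinarith
      have hmono : MonotoneOn m (Icc a b) := by
        intro x hx y hy hxy
        rcases eq_or_lt_of_le hxy with rfl | hlt
        · exact le_refl _
        obtain ⟨h1, h2⟩ := hineq x hx y hy hxy
        nlinarith
      have hkey : W b - W a = ∫ t in a..b, m t := key_integral hab hmono hineq
      haveI : IsFiniteMeasure (volume.restrict (Ioc a b)) :=
        ⟨by rw [Measure.restrict_apply_univ]; exact measure_Ioc_lt_top⟩
      have hfub : ∫ s, I s ∂π = ∫ t in a..b, m t := by
        have hint : Integrable (Function.uncurry fun (s : S) (t : ℝ) => q t s)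
            (π.prod (volume.restrict (Ioc a b))) := by
          refine (integrable_const 1).mono'
            (hqm.comp measurable_swap).aestronglyMeasurable ?_
          exact Filter.Eventually.of_forall fun z => by simpa [Function.uncurry_def] using hq1 z.2 z.1
        have hIoc : ∀ s : S, I s = ∫ t, q t s ∂(volume.restrict (Ioc a b)) := fun s =>
          intervalIntegral.integral_of_le hab
        have hswap := integral_integral_swap (f := fun (s : S) (t : ℝ) => q t s) hint
        have hL : ∫ s, I s ∂π = ∫ s, ∫ t, q t s ∂(volume.restrict (Ioc a b)) ∂π :=
          integral_congr_ae (Filter.Eventually.of_forall hIoc)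
        have hR : (∫ t in a..b, m t)
            = ∫ t, ∫ s, q t s ∂π ∂(volume.restrict (Ioc a b)) :=
          intervalIntegral.integral_of_le hab
        exact hL.trans (hswap.trans hR.symm)
      have hIint : Integrable I π :=
        (integrable_const 1).mono' hImeas.aestronglyMeasurable
          (Filter.Eventually.of_forall fun s => by simpa using hIbd s)
      have hib : Integrable (fun s => b * q b s - p b s - (a * q a s - p a s)) π :=
        (hUint b b).sub (hUint a a)
      have hsplit : ∫ s, g s ∂π = (W b - W a) - ∫ s, I s ∂π := by
        rw [hWd, hWd, hgdef]
        rw [integral_sub hib hIint, integral_sub (hUint b b) (hUint a a)]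
      rw [hsplit, hfub, hkey, sub_self]
    have hzero' := hFD g hgmeas hgbd hzero
    intro s
    have hgs := hzero' s
    simp only [hgdef, hIdef] at hgs
    linarith
  -- Lebesgue number argument
  choose δ hδpos hδ using hloc
  obtain ⟨δ₀, hδ₀pos, hLeb⟩ := lebesgue_number_lemma_of_metric
    (isCompact_Icc (a := (0:ℝ)) (b := 1))
    (c := fun i : Icc (0:ℝ) 1 => Metric.ball (i : ℝ) (δ i i.2))
    (fun i => Metric.isOpen_ball)
    (fun t ht => mem_iUnion.mpr ⟨⟨t, ht⟩, Metric.mem_ball_self (hδpos t ht)⟩)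
  have hsmall : ∀ u v : ℝ, u ∈ Icc (0:ℝ) 1 → v ∈ Icc (0:ℝ) 1 → u ≤ v → v - u < δ₀ →
      ∀ s, v * q v s - p v s - (u * q u s - p u s) = ∫ t in u..v, q t s := by
    intro u v hu hv huv hd s
    obtain ⟨i, hi⟩ := hLeb u hu
    have hub : u ∈ Metric.ball (i : ℝ) (δ i i.2) := hi (Metric.mem_ball_self hδ₀pos)
    have hvb : v ∈ Metric.ball (i : ℝ) (δ i i.2) := hi (by
      rw [Metric.mem_ball, Real.dist_eq, abs_of_nonneg (by linarith)]; exact hd)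
    exact hδ i i.2 u v ⟨hub, hu⟩ ⟨hvb, hv⟩ huv s
  have hchain : ∀ a b : ℝ, a ∈ Icc (0:ℝ) 1 → b ∈ Icc (0:ℝ) 1 → a ≤ b →
      ∀ s, b * q b s - p b s - (a * q a s - p a s) = ∫ t in a..b, q t s := by
    intro a b ha hb hab s
    obtain ⟨n, hn⟩ := exists_nat_gt ((b - a) / δ₀)
    have hn0 : 0 < n := by
      have h0 : (0:ℝ) ≤ (b - a) / δ₀ := div_nonneg (by linarith) hδ₀pos.le
      exact_mod_cast Nat.cast_pos.mp (lt_of_le_of_lt h0 hn)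
    have hnR : (0:ℝ) < n := Nat.cast_pos.mpr hn0
    set Δ := (b - a) / n with hΔ
    have hΔ0 : 0 ≤ Δ := div_nonneg (by linarith) hnR.le
    have hΔδ : Δ < δ₀ := by
      rw [hΔ, div_lt_iff₀ hnR]
      have := (div_lt_iff₀ hδ₀pos).mp hn
      linarith
    set x : ℕ → ℝ := fun j => a + j * Δ with hx
    have hx0 : x 0 = a := by simp [hx]
    have hxn : x n = b := by
      simp only [hx, hΔ]
      rw [mul_div_assoc', mul_div_cancel_left₀ _ hnR.ne']
      ring
    have hxmono : ∀ j k : ℕ, j ≤ k → x j ≤ x k := by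
      intro j k hjk
      have : (j : ℝ) ≤ k := Nat.cast_le.mpr hjk
      simp only [hx]
      nlinarith
    have hxmem : ∀ j ≤ n, x j ∈ Icc a b := fun j hj =>
      ⟨by rw [← hx0]; exact hxmono 0 j (Nat.zero_le _),
       by rw [← hxn]; exact hxmono j n hj⟩
    have hx01 : ∀ j ≤ n, x j ∈ Icc (0:ℝ) 1 := fun j hj =>
      ⟨le_trans ha.1 (hxmem j hj).1, le_trans (hxmem j hj).2 hb.2⟩
    have hxd : ∀ j : ℕ, x (j + 1) - x j = Δ := by
      intro j; simp only [hx]; push_cast; ring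
    have hind : ∀ j, j ≤ n →
        x j * q (x j) s - p (x j) s - (a * q a s - p a s) = ∫ t in a..x j, q t s := by
      intro j
      induction j with
      | zero => intro _; rw [hx0]; simp
      | succ k ih =>
        intro hk
        have h1 := ih (Nat.le_of_succ_le hk)
        have h2 := hsmall (x k) (x (k + 1)) (hx01 k (Nat.le_of_succ_le hk)) (hx01 (k + 1) hk)
          (hxmono k (k + 1) (Nat.le_succ _)) (by rw [hxd k]; exact hΔδ) s
        have h3 := intervalIntegral.integral_add_adjacent_intervals
          (hqti s a (x k)) (hqti s (x k) (x (k + 1)))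
        linarith
    have := hind n le_rfl
    rw [hxn] at this
    exact this
  intro t' ht' t'' ht'' s
  rcases le_total t' t'' with h | h
  · exact hchain t' t'' ht' ht'' h s
  · have h1 := hchain t'' t' ht'' ht' h s
    have h2 := intervalIntegral.integral_symm (μ := volume) (f := fun t => q t s) t'' t'
    rw [h2]
    linarith
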